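/- Let n and r be integers with 2 < r < n, and let a ∈ ℂⁿ. For b ∈ ℂⁿ define the univariate polynomial f_{a,b}(X) = e_r(X·a_1 + b_1, …, X·a_n + b_n) ∈ ℂ[X]. Then deg(f_{a,b}) ≤ 1 for all b ∈ ℂⁿ if and only if a has at most one nonzero entry. -/

import Mathlib

open Finset Polynomial

/-- The `r`-th elementary symmetric polynomial in `n` variables, evaluated at `x : Fin n → ℂ`. -/
noncomputable def esymm (n r : ℕ) (x : Fin n → ℂ) : ℂ :=
  ∑ I ∈ Finset.powersetCard r Finset.univ, ∏ i ∈ I, x i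

/-- For `a b : ℂⁿ`, the univariate polynomial `f_{a,b}(X) = e_r(X·a₁ + b₁, …, X·aₙ + bₙ)`. -/
noncomputable def fPoly (n r : ℕ) (a b : Fin n → ℂ) : Polynomial ℂ :=
  ∑ I ∈ Finset.powersetCard r Finset.univ,
    ∏ i ∈ I, (Polynomial.X * Polynomial.C (a i) + Polynomial.C (b i))

/-- Sum of products of pairs from `S`. -/
noncomputable def E2aux {n : ℕ} (a : Fin n → ℂ) (S : Finset (Fin n)) : ℂ :=
  ∑ t ∈ S.powersetCard 2, ∏ i ∈ t, a i

lemma E2aux_insert {n : ℕ} (a : Fin n → ℂ) {S : Finset (Fin n)} {j : Fin n} (hj : j ∉ S) :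
    E2aux a (insert j S) = E2aux a S + a j * ∑ i ∈ S, a i := by
  unfold E2aux
  have hps := Finset.powersetCard_succ_insert (n := 1) hj
  norm_num at hps
  rw [hps, Finset.sum_union, Finset.sum_image]
  · congr 1
    rw [Finset.powersetCard_one, Finset.sum_map, Finset.mul_sum]
    refine Finset.sum_congr rfl fun k hk => ?_
    have hjk : j ∉ ({k} : Finset (Fin n)) := by
      simp only [Finset.mem_singleton]
      rintro rfl; exact hj hk
    simp [Finset.prod_insert hjk]
  · intro x hx y hy hxy
    have hjx : j ∉ x := fun h => hj ((Finset.mem_powersetCard.mp hx).1 h)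
    have hjy : j ∉ y := fun h => hj ((Finset.mem_powersetCard.mp hy).1 h)
    rw [← Finset.erase_insert hjx, ← Finset.erase_insert hjy, hxy]
  · rw [Finset.disjoint_left]
    intro t ht ht'
    obtain ⟨u, hu, rfl⟩ := Finset.mem_image.mp ht'
    exact hj ((Finset.mem_powersetCard.mp ht).1 (Finset.mem_insert_self j u))

lemma E2aux_zero_of_all {n : ℕ} (a : Fin n → ℂ) (m : ℕ) (hm : 3 ≤ m)
    (hbase : ∀ T : Finset (Fin n), T.card = m → E2aux a T = 0) :
    ∀ (k : ℕ) (U : Finset (Fin n)), U.card = m + k → E2aux a U = 0 := by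
  intro k
  induction k with
  | zero => exact fun U hU => hbase U hU
  | succ k ih =>
    intro U hU
    have key : ∑ j ∈ U, E2aux a (U.erase j) = (m + k - 1 : ℕ) • E2aux a U := by
      unfold E2aux
      rw [Finset.sum_comm' (t' := U.powersetCard 2) (s' := fun t => U \ t)
        (f := fun _ t => ∏ i ∈ t, a i) ?_, Finset.smul_sum]
      · refine Finset.sum_congr rfl fun t ht => ?_
        obtain ⟨htU, htc⟩ := Finset.mem_powersetCard.mp ht
        rw [Finset.sum_const]
        congr 1
        rw [Finset.card_sdiff_of_subset htU, htc, hU]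
        omega
      · intro j t
        simp only [Finset.mem_powersetCard, Finset.mem_sdiff, Finset.subset_erase]
        tauto
    have hz : ∑ j ∈ U, E2aux a (U.erase j) = 0 := by
      refine Finset.sum_eq_zero fun j hj => ih (U.erase j) ?_
      rw [Finset.card_erase_of_mem hj, hU]
      omega
    rw [hz] at key
    have h1 : ((m + k - 1 : ℕ) : ℂ) * E2aux a U = 0 := by
      rw [← nsmul_eq_mul, ← key]
    rcases mul_eq_zero.mp h1 with h | h
    · exfalso
      have : (m + k - 1 : ℕ) ≠ 0 := by omega
      exact this (by exact_mod_cast h)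
    · exact h

lemma coeff_two_indicator (n r : ℕ) (hr2 : 2 ≤ r) (hrn : r ≤ n) (a : Fin n → ℂ)
    (L : Finset (Fin n)) (hL : L.card = r - 2) :
    (fPoly n r a (fun i => if i ∈ L then 1 else 0)).coeff 2
      = ∑ t ∈ Finset.powersetCard 2 Lᶜ, ∏ i ∈ t, a i := by
  unfold fPoly
  rw [Polynomial.finset_sum_coeff]
  have step1 : ∀ I ∈ Finset.powersetCard r (Finset.univ : Finset (Fin n)),
      (∏ i ∈ I, (X * C (a i) + C (if i ∈ L then (1:ℂ) else 0))).coeff 2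
        = if L ⊆ I then ∏ i ∈ I \ L, a i else 0 := by
    intro I hI
    obtain ⟨-, hIcard⟩ := Finset.mem_powersetCard.mp hI
    rw [Finset.prod_add, Polynomial.finset_sum_coeff]
    have hterm : ∀ t ∈ I.powerset,
        ((∏ i ∈ t, X * C (a i)) *
          ∏ i ∈ I \ t, C (if i ∈ L then (1:ℂ) else 0)).coeff 2
        = if t.card = 2 ∧ I \ t = L then ∏ i ∈ t, a i else 0 := by
      intro t ht
      have htI : t ⊆ I := Finset.mem_powerset.mp ht
      have h1 : (∏ i ∈ t, X * C (a i))
          = C (∏ i ∈ t, a i) * X ^ t.card := by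
        rw [Finset.prod_mul_distrib, Finset.prod_const, map_prod]
        ring
      have h2 : (∏ i ∈ I \ t, C (if i ∈ L then (1:ℂ) else 0))
          = C (if I \ t ⊆ L then (1:ℂ) else 0) := by
        rw [← map_prod, Finset.prod_boole]
        by_cases hsub : I \ t ⊆ L
        · rw [if_pos (fun i hi => hsub hi), if_pos hsub]
        · rw [if_neg fun hall => hsub fun i hi => hall i hi, if_neg hsub]
      rw [h1, h2, mul_assoc, Polynomial.coeff_C_mul, Polynomial.coeff_mul_C,
        Polynomial.coeff_X_pow]
      by_cases hc : t.card = 2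
      · by_cases hsub : I \ t ⊆ L
        · have heq : I \ t = L := Finset.eq_of_subset_of_card_le hsub (by
            rw [hL, Finset.card_sdiff_of_subset htI, hIcard, hc])
          simp [hc, hsub, heq]
        · have hcond : ¬ (t.card = 2 ∧ I \ t = L) := by
            rintro ⟨-, rfl⟩; exact hsub (Finset.Subset.refl _)
          have hne : I \ t ≠ L := fun hd => hsub (hd ▸ Finset.Subset.refl _)
          simp [hc, hsub, hne]
      · simp [Ne.symm hc, hc]
    rw [Finset.sum_congr rfl hterm]
    by_cases hLI : L ⊆ I
    · rw [Finset.sum_eq_single (I \ L)]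
      · have h1 : (I \ L).card = 2 := by
          rw [Finset.card_sdiff_of_subset hLI, hIcard, hL]; omega
        have h2 : I \ (I \ L) = L := by
          rw [Finset.sdiff_sdiff_self_left, Finset.inter_eq_right.mpr hLI]
        simp [hLI, h1, h2]
      · intro t ht hne
        have htI : t ⊆ I := Finset.mem_powerset.mp ht
        have hcond : ¬(t.card = 2 ∧ I \ t = L) := by
          rintro ⟨-, hd⟩
          apply hne
          rw [← hd, Finset.sdiff_sdiff_self_left, Finset.inter_eq_right.mpr htI]
        simp [hcond]
      · intro h
        exact absurd (Finset.mem_powerset.mpr Finset.sdiff_subset) h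
    · rw [if_neg hLI]
      refine Finset.sum_eq_zero fun t ht => ?_
      have hcond : ¬(t.card = 2 ∧ I \ t = L) := by
        rintro ⟨-, hd⟩; exact hLI (hd ▸ Finset.sdiff_subset)
      simp [hcond]
  rw [Finset.sum_congr rfl step1, ← Finset.sum_filter]
  refine Finset.sum_nbij' (fun I => I \ L) (fun t => L ∪ t) ?_ ?_ ?_ ?_ ?_
  · intro I hI
    obtain ⟨hI1, hI2⟩ := Finset.mem_filter.mp hI
    obtain ⟨-, hIcard⟩ := Finset.mem_powersetCard.mp hI1
    rw [Finset.mem_powersetCard]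
    constructor
    · intro x hx
      rw [Finset.mem_compl]
      exact (Finset.mem_sdiff.mp hx).2
    · rw [Finset.card_sdiff_of_subset hI2, hIcard, hL]; omega
  · intro t ht
    obtain ⟨htc, htcard⟩ := Finset.mem_powersetCard.mp ht
    have hdisj : Disjoint L t := by
      rw [Finset.disjoint_left]
      intro x hx hxt
      exact (Finset.mem_compl.mp (htc hxt)) hx
    rw [Finset.mem_filter, Finset.mem_powersetCard]
    refine ⟨⟨Finset.subset_univ _, ?_⟩, Finset.subset_union_left⟩
    rw [Finset.card_union_of_disjoint hdisj, hL, htcard]; omega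
  · intro I hI
    exact Finset.union_sdiff_of_subset (Finset.mem_filter.mp hI).2
  · intro t ht
    obtain ⟨htc, -⟩ := Finset.mem_powersetCard.mp ht
    refine Finset.union_sdiff_cancel_left ?_
    rw [Finset.disjoint_left]
    intro x hx hxt
    exact (Finset.mem_compl.mp (htc hxt)) hx
  · intro I hI; rfl

theorem degree_le_one_iff_at_most_one_nonzero (n r : ℕ) (hr : 2 < r) (hrn : r < n)
    (a : Fin n → ℂ) :
    (∀ b : Fin n → ℂ, (fPoly n r a b).degree ≤ 1) ↔
      (Finset.univ.filter fun i => a i ≠ 0).card ≤ 1 := by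
  constructor
  · intro h
    set σ := ∑ i : Fin n, a i with hσ
    have hE2 : ∀ U : Finset (Fin n), U.card ≥ n - r + 2 → E2aux a U = 0 := by
      have hbase : ∀ T : Finset (Fin n), T.card = n - r + 2 → E2aux a T = 0 := by
        intro T hT
        have hLcard : Tᶜ.card = r - 2 := by
          rw [Finset.card_compl, hT, Fintype.card_fin]; omega
        have hco := coeff_two_indicator n r (le_of_lt hr) (le_of_lt hrn) a Tᶜ hLcard
        rw [compl_compl] at hco
        rw [E2aux, ← hco]
        refine Polynomial.coeff_eq_zero_of_degree_lt (lt_of_le_of_lt (h _) ?_)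
        norm_num
      intro U hU
      obtain ⟨k, hk⟩ := Nat.exists_eq_add_of_le hU
      exact E2aux_zero_of_all a (n - r + 2) (by omega) hbase k U hk
    have hkey : ∀ j : Fin n, a j * (σ - a j) = 0 := by
      intro j
      have h1 : E2aux a Finset.univ = 0 := by
        refine hE2 _ ?_
        rw [Finset.card_univ, Fintype.card_fin]; omega
      have h2 : E2aux a (Finset.univ.erase j) = 0 := by
        refine hE2 _ ?_
        rw [Finset.card_erase_of_mem (Finset.mem_univ j), Finset.card_univ,
          Fintype.card_fin]; omega
      have h3 := E2aux_insert a (Finset.notMem_erase j Finset.univ)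
      rw [Finset.insert_erase (Finset.mem_univ j)] at h3
      have h4 : ∑ i ∈ Finset.univ.erase j, a i = σ - a j := by
        rw [hσ, ← Finset.sum_erase_add Finset.univ a (Finset.mem_univ j)]
        ring
      rw [h1, h2, h4] at h3
      linear_combination -h3
    by_contra hc
    push_neg at hc
    obtain ⟨i, hi, j, hj, hij⟩ := Finset.one_lt_card.mp hc
    have hai : a i ≠ 0 := by simpa using (Finset.mem_filter.mp hi).2
    have hval : ∀ k : Fin n, a k ≠ 0 → a k = σ := by
      intro k hk
      rcases mul_eq_zero.mp (hkey k) with h' | h'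
      · exact absurd h' hk
      · linear_combination -h'
    have hσne : σ ≠ 0 := by rw [← hval i hai]; exact hai
    have hsum : σ = ((Finset.univ.filter fun k => a k ≠ 0).card : ℂ) * σ := by
      calc σ = ∑ k ∈ Finset.univ.filter (fun k => a k ≠ 0), a k := by
              rw [hσ, Finset.sum_filter_ne_zero]
        _ = ∑ _k ∈ Finset.univ.filter (fun k => a k ≠ 0), σ :=
              Finset.sum_congr rfl fun k hk => hval k (by simpa using (Finset.mem_filter.mp hk).2)
        _ = _ := by rw [Finset.sum_const, nsmul_eq_mul]
    have hcard1 : ((Finset.univ.filter fun k => a k ≠ 0).card : ℂ) = 1 := by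
      have h5 : (((Finset.univ.filter fun k => a k ≠ 0).card : ℂ) - 1) * σ = 0 := by
        linear_combination -hsum
      rcases mul_eq_zero.mp h5 with h' | h'
      · linear_combination h'
      · exact absurd h' hσne
    have : (Finset.univ.filter fun k => a k ≠ 0).card = 1 := by
      exact_mod_cast hcard1
    omega
  · intro hcard b
    unfold fPoly
    refine le_trans (Polynomial.degree_sum_le _ _) (Finset.sup_le fun I _ => ?_)
    rw [← Finset.prod_filter_mul_prod_filter_not I (fun i => a i ≠ 0)]
    refine le_trans (Polynomial.degree_mul_le _ _) ?_
    have h2 : (∏ i ∈ I.filter (fun i => ¬ a i ≠ 0), (X * C (a i) + C (b i)))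
        = C (∏ i ∈ I.filter (fun i => ¬ a i ≠ 0), b i) := by
      rw [show (∏ i ∈ I.filter (fun i => ¬ a i ≠ 0), (X * C (a i) + C (b i)))
          = ∏ i ∈ I.filter (fun i => ¬ a i ≠ 0), C (b i) from
        Finset.prod_congr rfl fun i hi => by
          have hzero : a i = 0 := by
            have h' := (Finset.mem_filter.mp hi).2
            push_neg at h'; exact h'
          rw [hzero]; simp]
      rw [map_prod]
    rw [h2]
    have h1 : (∏ i ∈ I.filter (fun i => a i ≠ 0), (X * C (a i) + C (b i))).degree ≤ 1 := by
      have hsub : I.filter (fun i => a i ≠ 0) ⊆ Finset.univ.filter (fun i => a i ≠ 0) :=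
        Finset.filter_subset_filter _ (Finset.subset_univ I)
      have hc : (I.filter fun i => a i ≠ 0).card ≤ 1 :=
        le_trans (Finset.card_le_card hsub) hcard
      rcases Nat.le_one_iff_eq_zero_or_eq_one.mp hc with h0 | h1
      · rw [Finset.card_eq_zero.mp h0, Finset.prod_empty]
        exact le_trans degree_one_le (by norm_num)
      · obtain ⟨i, hi⟩ := Finset.card_eq_one.mp h1
        rw [hi, Finset.prod_singleton]
        compute_degree
    calc _ ≤ (1 : WithBot ℕ) + 0 := add_le_add h1 Polynomial.degree_C_le
      _ = 1 := by norm_num
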